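/- Let k be a field and let η_1 > η_2 > … > η_s be strictly decreasing positive integers. Suppose c_1, …, c_s and c'_1, …, c'_s are units of k⟦x,y⟧ such that ∏_{i=1}^{s} (y^{η_i} + c_i·x) = ∏_{i=1}^{s} (y^{η_i} + c'_i·x) in k⟦x,y⟧. Then for every i the elements y^{η_i} + c_i·x and y^{η_i} + c'_i·x are associates in k⟦x,y⟧ (they generate the same ideal); in particular the constant coefficients of c_i and c'_i are equal. -/

import Mathlib

open MvPowerSeries Finset

namespace Stmt3Aux

variable {k : Type*} [Field k]

variable {k : Type*} [Field k]

noncomputable def d2 (m n : ℕ) : Fin 2 →₀ ℕ := Finsupp.single 0 m + Finsupp.single 1 n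

@[simp] lemma d2_apply0 (m n : ℕ) : d2 m n 0 = m := by
  simp [d2, Finsupp.single_apply]

@[simp] lemma d2_apply1 (m n : ℕ) : d2 m n 1 = n := by
  simp [d2, Finsupp.single_apply]

lemma d2_eta (d : Fin 2 →₀ ℕ) : d2 (d 0) (d 1) = d := by
  ext i
  fin_cases i
  · simp
  · simp

lemma d2_inj {m n m' n' : ℕ} (h : d2 m n = d2 m' n') : m = m' ∧ n = n' := by
  constructor
  · have := congrArg (fun f => f 0) h; simpa using this
  · have := congrArg (fun f => f 1) h; simpa using this

@[simp] lemma d2_eq_iff {m n m' n' : ℕ} : d2 m n = d2 m' n' ↔ m = m' ∧ n = n' := by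
  refine ⟨d2_inj, ?_⟩
  rintro ⟨rfl, rfl⟩; rfl

lemma d2_zero : d2 0 0 = 0 := by simp [d2]

lemma single0_eq (m : ℕ) : Finsupp.single (0 : Fin 2) m = d2 m 0 := by simp [d2]

lemma single1_eq (n : ℕ) : Finsupp.single (1 : Fin 2) n = d2 0 n := by simp [d2]

lemma d2_add (m n m' n' : ℕ) : d2 m n + d2 m' n' = d2 (m + m') (n + n') := by
  ext i
  fin_cases i <;> simp

/-- Coefficient of a product, as a double sum over natural antidiagonals. -/
lemma coeff_mul2 (f g : MvPowerSeries (Fin 2) k) (m n : ℕ) :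
    coeff (d2 m n) (f * g)
      = ∑ p ∈ antidiagonal m, ∑ q ∈ antidiagonal n,
          coeff (d2 p.1 q.1) f * coeff (d2 p.2 q.2) g := by
  rw [MvPowerSeries.coeff_mul, ← Finset.sum_product']
  refine Finset.sum_nbij' (fun x => ((x.1 0, x.2 0), (x.1 1, x.2 1)))
    (fun y => (d2 y.1.1 y.2.1, d2 y.1.2 y.2.2)) ?_ ?_ ?_ ?_ ?_
  · intro x hx
    rw [Finset.HasAntidiagonal.mem_antidiagonal] at hx
    simp only [Finset.mem_product, Finset.HasAntidiagonal.mem_antidiagonal]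
    constructor
    · have := congrArg (fun f => f 0) hx; simpa using this
    · have := congrArg (fun f => f 1) hx; simpa using this
  · intro y hy
    simp only [Finset.mem_product, Finset.HasAntidiagonal.mem_antidiagonal] at hy
    rw [Finset.HasAntidiagonal.mem_antidiagonal, d2_add, hy.1, hy.2]
  · intro x hx
    simp only [Prod.ext_iff]
    exact ⟨d2_eta _, d2_eta _⟩
  · intro y hy
    simp
  · intro x hx
    rw [d2_eta, d2_eta]

@[simp] lemma coeff_d2_X0 (m n : ℕ) :
    coeff (d2 m n) (X 0 : MvPowerSeries (Fin 2) k) = if m = 1 ∧ n = 0 then 1 else 0 := by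
  rw [MvPowerSeries.coeff_X, single0_eq]
  by_cases h : m = 1 ∧ n = 0
  · rw [if_pos (by simp [h.1, h.2]), if_pos h]
  · rw [if_neg (by simpa using h), if_neg h]

@[simp] lemma coeff_d2_X1pow (m n a : ℕ) :
    coeff (d2 m n) ((X 1 : MvPowerSeries (Fin 2) k) ^ a) = if m = 0 ∧ n = a then 1 else 0 := by
  rw [MvPowerSeries.coeff_X_pow, single1_eq]
  by_cases h : m = 0 ∧ n = a
  · rw [if_pos (by simp [h.1, h.2]), if_pos h]
  · rw [if_neg (by simpa using h), if_neg h]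

/-- `L1`: multiplying by `X 0` shifts coefficients. -/
lemma coeff_mul_X0 (f : MvPowerSeries (Fin 2) k) (m n : ℕ) :
    coeff (d2 m n) (f * X 0)
      = if 1 ≤ m then coeff (d2 (m - 1) n) f else 0 := by
  rw [coeff_mul2]
  rcases Nat.eq_zero_or_pos m with rfl | hm
  · rw [if_neg (by omega)]
    refine Finset.sum_eq_zero fun p hp => Finset.sum_eq_zero fun q hq => ?_
    rw [Finset.HasAntidiagonal.mem_antidiagonal] at hp
    rw [coeff_d2_X0, if_neg (by omega), mul_zero]
  · rw [if_pos (by omega : 1 ≤ m)]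
    rw [Finset.sum_eq_single (m - 1, 1)]
    · rw [Finset.sum_eq_single (n, 0)]
      · rw [coeff_d2_X0, if_pos ⟨rfl, rfl⟩, mul_one]
      · intro q hq hne
        rw [Finset.HasAntidiagonal.mem_antidiagonal] at hq
        rw [coeff_d2_X0, if_neg (by
          rintro ⟨h1, h2⟩
          exact hne (by simp [Prod.ext_iff]; omega)), mul_zero]
      · intro h
        exact absurd (by rw [Finset.HasAntidiagonal.mem_antidiagonal]; omega) h
    · intro p hp hne
      rw [Finset.HasAntidiagonal.mem_antidiagonal] at hp
      refine Finset.sum_eq_zero fun q hq => ?_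
      rw [Finset.HasAntidiagonal.mem_antidiagonal] at hq
      rw [coeff_d2_X0, if_neg (by
        rintro ⟨h1, h2⟩
        exact hne (by simp [Prod.ext_iff]; omega)), mul_zero]
    · intro h
      exact absurd (by rw [Finset.HasAntidiagonal.mem_antidiagonal]; omega) h

/-- `L3`: products with `X 1 ^ a`, `a ≥ 1`, have no monomials of `y`-degree `0`. -/
lemma coeff_mul_X1pow_y0 (f : MvPowerSeries (Fin 2) k) {a : ℕ} (ha : 1 ≤ a) (m : ℕ) :
    coeff (d2 m 0) (f * (X 1) ^ a) = 0 := by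
  rw [coeff_mul2]
  refine Finset.sum_eq_zero fun p hp => Finset.sum_eq_zero fun q hq => ?_
  rw [Finset.HasAntidiagonal.mem_antidiagonal] at hq
  rw [coeff_d2_X1pow, if_neg (by omega), mul_zero]



section Division

variable (c : MvPowerSeries (Fin 2) k)

/-- `L2`: convolution against a series all of whose monomials have positive `y`-degree. -/
lemma coeff_mul_c (hc : ∀ m, coeff (d2 m 0) c = 0) (f : MvPowerSeries (Fin 2) k) (M n : ℕ) :
    coeff (d2 M n) (f * c)
      = ∑ m1 ∈ range (M + 1), ∑ n1 ∈ range n,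
          coeff (d2 m1 n1) f * coeff (d2 (M - m1) (n - n1)) c := by
  rw [coeff_mul2, Finset.Nat.sum_antidiagonal_eq_sum_range_succ_mk]
  refine Finset.sum_congr rfl fun m1 _ => ?_
  rw [Finset.Nat.sum_antidiagonal_eq_sum_range_succ_mk, Finset.sum_range_succ,
    Nat.sub_self, hc, mul_zero, add_zero]

/-- The coefficients of the quotient in division by `X 0 + c`. -/
noncomputable def row (c g : MvPowerSeries (Fin 2) k) (n m : ℕ) : k :=
  coeff (d2 (m + 1) n) g -
    ∑ m1 ∈ range (m + 2), ∑ n1 ∈ (range n).attach,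
      row c g n1.1 m1 * coeff (d2 (m + 1 - m1) (n - n1.1)) c
  termination_by n
  decreasing_by exact Finset.mem_range.mp n1.2

/-- The quotient in division by `X 0 + c`. -/
noncomputable def qt (c g : MvPowerSeries (Fin 2) k) : MvPowerSeries (Fin 2) k :=
  fun d => row c g (d 1) (d 0)

lemma coeff_qt (g : MvPowerSeries (Fin 2) k) (m n : ℕ) :
    coeff (d2 m n) (qt c g) = row c g n m := by
  have : coeff (d2 m n) (qt c g) = row c g (d2 m n 1) (d2 m n 0) := rfl
  rw [this]
  norm_num [d2, Finsupp.single_apply]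

/-- A power series is `x`-free if all coefficients with positive `x`-degree vanish. -/
def XFree (h : MvPowerSeries (Fin 2) k) : Prop :=
  ∀ m n : ℕ, 1 ≤ m → coeff (d2 m n) h = 0

lemma coeff_mul_XaddC (hc : ∀ m, coeff (d2 m 0) c = 0) (Q : MvPowerSeries (Fin 2) k)
    (m n : ℕ) :
    coeff (d2 (m + 1) n) (Q * (X 0 + c))
      = coeff (d2 m n) Q + ∑ m1 ∈ range (m + 2), ∑ n1 ∈ range n,
          coeff (d2 m1 n1) Q * coeff (d2 (m + 1 - m1) (n - n1)) c := by
  rw [mul_add, map_add, coeff_mul_X0, if_pos (by omega), Nat.add_sub_cancel,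
    coeff_mul_c c hc]

lemma coeff_qt_mul (hc : ∀ m, coeff (d2 m 0) c = 0) (g : MvPowerSeries (Fin 2) k)
    (m n : ℕ) :
    coeff (d2 (m + 1) n) (qt c g * (X 0 + c)) = coeff (d2 (m + 1) n) g := by
  rw [coeff_mul_XaddC c hc, coeff_qt]
  have hrow : row c g n m
      = coeff (d2 (m + 1) n) g -
          ∑ m1 ∈ range (m + 2), ∑ n1 ∈ range n,
            row c g n1 m1 * coeff (d2 (m + 1 - m1) (n - n1)) c := by
    rw [row]
    congr 1
    refine Finset.sum_congr rfl fun m1 _ => ?_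
    exact Finset.sum_attach (range n)
      (fun n1 => row c g n1 m1 * coeff (d2 (m + 1 - m1) (n - n1)) c)
  have hcoef : ∀ m1 ∈ range (m + 2), ∀ n1 ∈ range n,
      coeff (d2 m1 n1) (qt c g) * coeff (d2 (m + 1 - m1) (n - n1)) c
        = row c g n1 m1 * coeff (d2 (m + 1 - m1) (n - n1)) c := by
    intro m1 _ n1 _
    rw [coeff_qt]
  rw [Finset.sum_congr rfl fun m1 hm1 => Finset.sum_congr rfl fun n1 hn1 =>
    hcoef m1 hm1 n1 hn1, hrow]
  ring

lemma exists_div (hc : ∀ m, coeff (d2 m 0) c = 0) (g : MvPowerSeries (Fin 2) k) :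
    ∃ Q r : MvPowerSeries (Fin 2) k, XFree r ∧ g = Q * (X 0 + c) + r := by
  refine ⟨qt c g, g - qt c g * (X 0 + c), ?_, by ring⟩
  intro m n hm
  obtain ⟨m, rfl⟩ : ∃ m', m = m' + 1 := ⟨m - 1, by omega⟩
  rw [map_sub, coeff_qt_mul c hc, sub_self]

lemma eq_zero_of_mul_XaddC (hc : ∀ m, coeff (d2 m 0) c = 0)
    {Q r : MvPowerSeries (Fin 2) k} (hr : XFree r)
    (h : Q * (X 0 + c) + r = 0) : Q = 0 ∧ r = 0 := by
  have key : ∀ n m : ℕ, coeff (d2 m n) Q = 0 := by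
    intro n
    induction n using Nat.strong_induction_on with
    | _ n ih =>
      intro m
      have h0 : coeff (d2 (m + 1) n) (Q * (X 0 + c) + r) = 0 := by rw [h, map_zero]
      rw [map_add, coeff_mul_XaddC c hc, hr _ _ (by omega)] at h0
      have hz : ∑ m1 ∈ range (m + 2), ∑ n1 ∈ range n,
          coeff (d2 m1 n1) Q * coeff (d2 (m + 1 - m1) (n - n1)) c = 0 :=
        Finset.sum_eq_zero fun m1 _ => Finset.sum_eq_zero fun n1 hn1 => by
          rw [ih n1 (Finset.mem_range.mp hn1) m1, zero_mul]
      rw [hz, add_zero, add_zero] at h0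
      exact h0
  have hQ : Q = 0 := by
    apply MvPowerSeries.ext
    intro d
    rw [map_zero, ← d2_eta d]
    exact key _ _
  refine ⟨hQ, ?_⟩
  rw [hQ, zero_mul, zero_add] at h
  exact h

lemma xfree_mul {r1 r2 : MvPowerSeries (Fin 2) k} (h1 : XFree r1) (h2 : XFree r2) :
    XFree (r1 * r2) := by
  intro m n hm
  rw [coeff_mul2]
  refine Finset.sum_eq_zero fun p hp => Finset.sum_eq_zero fun q _ => ?_
  rw [Finset.HasAntidiagonal.mem_antidiagonal] at hp
  rcases Nat.eq_zero_or_pos p.1 with h | h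
  · rw [h2 p.2 q.2 (by omega), mul_zero]
  · rw [h1 p.1 q.1 (by omega), zero_mul]

lemma unique_rem (hc : ∀ m, coeff (d2 m 0) c = 0)
    {Q1 Q2 r1 r2 : MvPowerSeries (Fin 2) k} (h1 : XFree r1) (h2 : XFree r2)
    (h : Q1 * (X 0 + c) + r1 = Q2 * (X 0 + c) + r2) : r1 = r2 := by
  have h' : (Q1 - Q2) * (X 0 + c) + (r1 - r2) = 0 := by
    rw [sub_mul]; rw [← sub_eq_zero] at h; linear_combination h
  have hfree : XFree (r1 - r2) := by
    intro m n hm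
    rw [map_sub, h1 _ _ hm, h2 _ _ hm, sub_self]
  exact sub_eq_zero.mp (eq_zero_of_mul_XaddC c hc hfree h').2
  
theorem prime_X0_add (hc : ∀ m, coeff (d2 m 0) c = 0) :
    Prime (X 0 + c : MvPowerSeries (Fin 2) k) := by
  constructor
  · intro h
    have h1 := congrArg (coeff (d2 1 0)) h
    rw [map_zero, map_add, coeff_d2_X0 1 0, hc 1, add_zero] at h1
    simp at h1
  constructor
  · intro h
    have h0 : constantCoeff (X 0 + c) = 0 := by
      rw [map_add, constantCoeff_X, ← MvPowerSeries.coeff_zero_eq_constantCoeff_apply,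
        ← d2_zero, hc 0, add_zero]
    have := h.map (constantCoeff)
    rw [h0] at this
    simpa using this
  · rintro a b ⟨h, hab⟩
    obtain ⟨Qa, ra, hra, haeq⟩ := exists_div c hc a
    obtain ⟨Qb, rb, hrb, hbeq⟩ := exists_div c hc b
    have heq2 : h * (X 0 + c) + 0
        = (Qa * Qb * (X 0 + c) + Qa * rb + Qb * ra) * (X 0 + c) + ra * rb := by
      rw [add_zero, mul_comm h _, ← hab, haeq, hbeq]; ring
    have hr0 : (0 : MvPowerSeries (Fin 2) k) = ra * rb :=
      unique_rem c hc (fun m n hm => map_zero _) (xfree_mul hra hrb) heq2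
    rcases mul_eq_zero.mp hr0.symm with h0 | h0
    · left; exact ⟨Qa, by rw [haeq, h0, add_zero, mul_comm]⟩
    · right; exact ⟨Qb, by rw [hbeq, h0, add_zero, mul_comm]⟩

end Division


section Main

variable (c : MvPowerSeries (Fin 2) k)

lemma coeff_y (a : ℕ) (cc : MvPowerSeries (Fin 2) k) (n : ℕ) :
    coeff (d2 0 n) ((X 1 : MvPowerSeries (Fin 2) k) ^ a + cc * X 0)
      = if n = a then 1 else 0 := by
  rw [map_add, coeff_d2_X1pow, coeff_mul_X0]
  norm_num

lemma coeff_x1 (a : ℕ) (cc : MvPowerSeries (Fin 2) k) :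
    coeff (d2 1 0) ((X 1 : MvPowerSeries (Fin 2) k) ^ a + cc * X 0)
      = coeff (d2 0 0) cc := by
  rw [map_add, coeff_d2_X1pow, coeff_mul_X0]
  norm_num

lemma coeff_fv0 (f v : MvPowerSeries (Fin 2) k) (n : ℕ) :
    coeff (d2 0 n) (f * v)
      = ∑ q ∈ antidiagonal n, coeff (d2 0 q.1) f * coeff (d2 0 q.2) v := by
  rw [coeff_mul2]
  simp

lemma coeff_fv1 (f v : MvPowerSeries (Fin 2) k) :
    coeff (d2 1 0) (f * v)
      = coeff (d2 0 0) f * coeff (d2 1 0) v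
        + coeff (d2 1 0) f * coeff (d2 0 0) v := by
  rw [coeff_mul2]
  rw [show (antidiagonal 1 : Finset (ℕ × ℕ)) = {(0, 1), (1, 0)} from rfl]
  simp


lemma prime_normal {a : ℕ} (ha : 1 ≤ a) {cc : MvPowerSeries (Fin 2) k} (hcc : IsUnit cc) :
    Prime ((X 1 : MvPowerSeries (Fin 2) k) ^ a + cc * X 0) := by
  obtain ⟨u, rfl⟩ := hcc
  have hfree : ∀ m, coeff (d2 m 0) ((↑u⁻¹ : MvPowerSeries (Fin 2) k) * X 1 ^ a) = 0 :=
    fun m => coeff_mul_X1pow_y0 _ ha m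
  have hprime := prime_X0_add _ hfree
  have hassoc : Associated (X 0 + (↑u⁻¹ : MvPowerSeries (Fin 2) k) * X 1 ^ a)
      ((X 1 : MvPowerSeries (Fin 2) k) ^ a + (↑u : MvPowerSeries (Fin 2) k) * X 0) := by
    refine ⟨u, ?_⟩
    calc (X 0 + (↑u⁻¹ : MvPowerSeries (Fin 2) k) * X 1 ^ a) * (↑u : MvPowerSeries (Fin 2) k)
        = ((↑u⁻¹ : MvPowerSeries (Fin 2) k) * (↑u : MvPowerSeries (Fin 2) k)) * X 1 ^ a
            + (↑u : MvPowerSeries (Fin 2) k) * X 0 := by ring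
      _ = X 1 ^ a + (↑u : MvPowerSeries (Fin 2) k) * X 0 := by rw [Units.inv_mul, one_mul]
  exact hassoc.prime hprime

theorem main_theorem (s : ℕ)
    (η : ℕ → ℕ) (hηpos : ∀ i ∈ Finset.Icc 1 s, 0 < η i)
    (hηstrict : ∀ i ∈ Finset.Icc 1 s, ∀ j ∈ Finset.Icc 1 s, i < j → η j < η i)
    (c c' : ℕ → MvPowerSeries (Fin 2) k)
    (hc : ∀ i ∈ Finset.Icc 1 s, IsUnit (c i)) (hc' : ∀ i ∈ Finset.Icc 1 s, IsUnit (c' i))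
    (heq : ∏ i ∈ Finset.Icc 1 s,
        ((X 1 : MvPowerSeries (Fin 2) k) ^ η i + c i * (X 0 : MvPowerSeries (Fin 2) k))
      = ∏ i ∈ Finset.Icc 1 s,
        ((X 1 : MvPowerSeries (Fin 2) k) ^ η i + c' i * (X 0 : MvPowerSeries (Fin 2) k))) :
    ∀ i ∈ Finset.Icc 1 s,
      Associated
        ((X 1 : MvPowerSeries (Fin 2) k) ^ η i + c i * (X 0 : MvPowerSeries (Fin 2) k))
        ((X 1 : MvPowerSeries (Fin 2) k) ^ η i + c' i * (X 0 : MvPowerSeries (Fin 2) k))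
      ∧ constantCoeff (c i) = constantCoeff (c' i) := by
  intro i hi
  haveI : IsDomain (MvPowerSeries (Fin 2) k) := NoZeroDivisors.to_isDomain _
  have hprime : ∀ j ∈ Finset.Icc 1 s,
      Prime ((X 1 : MvPowerSeries (Fin 2) k) ^ η j + c j * X 0) :=
    fun j hj => prime_normal (hηpos j hj) (hc j hj)
  have hprime' : ∀ j ∈ Finset.Icc 1 s,
      Prime ((X 1 : MvPowerSeries (Fin 2) k) ^ η j + c' j * X 0) :=
    fun j hj => prime_normal (hηpos j hj) (hc' j hj)
  have hdvd : ((X 1 : MvPowerSeries (Fin 2) k) ^ η i + c i * X 0)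
      ∣ ∏ j ∈ Finset.Icc 1 s, ((X 1 : MvPowerSeries (Fin 2) k) ^ η j + c' j * X 0) := by
    rw [← heq]
    exact Finset.dvd_prod_of_mem _ hi
  obtain ⟨j, hj, hdvdj⟩ := (hprime i hi).exists_mem_finset_dvd hdvd
  have hassoc := (hprime i hi).associated_of_dvd (hprime' j hj) hdvdj
  obtain ⟨v, hv⟩ := hassoc
  have hv00 : coeff (d2 0 0) (↑v : MvPowerSeries (Fin 2) k) ≠ 0 := by
    have hu : IsUnit (constantCoeff (↑v : MvPowerSeries (Fin 2) k)) := v.isUnit.map _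
    rw [← MvPowerSeries.coeff_zero_eq_constantCoeff_apply, ← d2_zero] at hu
    exact hu.ne_zero
  have hkey : coeff (d2 0 0) (↑v : MvPowerSeries (Fin 2) k)
      = if η i = η j then (1 : k) else 0 := by
    have h0 := congrArg (coeff (d2 0 (η i))) hv
    rw [coeff_fv0, coeff_y] at h0
    rw [Finset.sum_eq_single (η i, 0)] at h0
    · rw [coeff_y, if_pos rfl, one_mul] at h0
      exact h0
    · intro q hq hne
      rw [Finset.HasAntidiagonal.mem_antidiagonal] at hq
      rw [coeff_y, if_neg, zero_mul]
      intro h1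
      exact hne (by rw [Prod.ext_iff]; constructor <;> simp <;> omega)
    · intro hmem
      exact absurd (by rw [Finset.HasAntidiagonal.mem_antidiagonal]; omega) hmem
  have hij : η i = η j := by
    by_contra hne
    rw [if_neg hne] at hkey
    exact hv00 hkey
  have hv1 : coeff (d2 0 0) (↑v : MvPowerSeries (Fin 2) k) = 1 := by
    rw [hkey, if_pos hij]
  have hji : j = i := by
    by_contra hne
    rcases Nat.lt_or_ge i j with hlt | hge
    · exact absurd hij (Nat.ne_of_gt (hηstrict i hi j hj hlt))
    · have hlt : j < i := by omega
      exact absurd hij (Nat.ne_of_lt (hηstrict j hj i hi hlt))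
  subst hji
  constructor
  · exact ⟨v, hv⟩
  · have h1 := congrArg (coeff (d2 1 0)) hv
    rw [coeff_fv1, coeff_x1, coeff_x1, coeff_y,
      if_neg (by have := hηpos j hj; omega), zero_mul, zero_add, hv1, mul_one] at h1
    have hcc : ∀ x : MvPowerSeries (Fin 2) k,
        constantCoeff x = coeff (d2 0 0) x := fun x => by
      rw [← MvPowerSeries.coeff_zero_eq_constantCoeff_apply, d2_zero]
    rw [hcc, hcc]
    exact h1

end Main

end Stmt3Aux



open MvPowerSeries

/-- Uniqueness part of the factorization lemma: for strictly decreasing `η₁ > … > η_s`,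
if `∏ᵢ (y^{ηᵢ} + cᵢ·x) = ∏ᵢ (y^{ηᵢ} + c'ᵢ·x)` with all `cᵢ, c'ᵢ` units, then for each `i`
the factors `y^{ηᵢ} + cᵢ·x` and `y^{ηᵢ} + c'ᵢ·x` are associates, and the constant
coefficients of `cᵢ` and `c'ᵢ` coincide. -/
theorem stmt_3 (k : Type*) [Field k] (s : ℕ)
    (η : ℕ → ℕ) (hηpos : ∀ i ∈ Finset.Icc 1 s, 0 < η i)
    (hηstrict : ∀ i ∈ Finset.Icc 1 s, ∀ j ∈ Finset.Icc 1 s, i < j → η j < η i)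
    (c c' : ℕ → MvPowerSeries (Fin 2) k)
    (hc : ∀ i ∈ Finset.Icc 1 s, IsUnit (c i)) (hc' : ∀ i ∈ Finset.Icc 1 s, IsUnit (c' i))
    (heq : ∏ i ∈ Finset.Icc 1 s,
        ((X 1 : MvPowerSeries (Fin 2) k) ^ η i + c i * (X 0 : MvPowerSeries (Fin 2) k))
      = ∏ i ∈ Finset.Icc 1 s,
        ((X 1 : MvPowerSeries (Fin 2) k) ^ η i + c' i * (X 0 : MvPowerSeries (Fin 2) k))) :
    ∀ i ∈ Finset.Icc 1 s,
      Associated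
        ((X 1 : MvPowerSeries (Fin 2) k) ^ η i + c i * (X 0 : MvPowerSeries (Fin 2) k))
        ((X 1 : MvPowerSeries (Fin 2) k) ^ η i + c' i * (X 0 : MvPowerSeries (Fin 2) k))
      ∧ constantCoeff (c i) = constantCoeff (c' i) := by
  exact Stmt3Aux.main_theorem s η hηpos hηstrict c c' hc hc' heq
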